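/- d-coarsening algorithm guarantee (unequal partitions): let x be a vector of length n = sum_{i=1}^m l_i with m >= 2 and l_i = c_i * d, and set C = sum_{i=1}^m c_i. Sort each block x^i, take its d-coarsening (entries of ranks d, 2d, ..., (c_i - 1)d), stack the results into w (of length C - m), and let mu = lq_w(p). Then mu is a quantile of x at some level p' with |p' - p| <= (m+1)/(C - m); in particular delta_x(mu, lq_x(p)) <= (m+1)/(C - m). -/

import Mathlib

/-- The left `p`-quantile of a data vector `v` of length `N > 0`: the `⌈Np⌉`-th
smallest entry of `v` (for `p ∈ (0,1]`; for `p = 0` it is the smallest entry). -/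
noncomputable def lqv {N : ℕ} (hN : 0 < N) (v : Fin N → ℝ) (p : ℝ) : ℝ :=
  (v ∘ Tuple.sort v) ⟨min (N - 1) (max 1 ⌈(N : ℝ) * p⌉₊ - 1), by omega⟩

open scoped Classical in
/-- The degree of separation of `a` and `b` with respect to the data vector `v`:
the fraction of entries of `v` lying strictly between `a` and `b`. -/
noncomputable def dosv {N : ℕ} (v : Fin N → ℝ) (a b : ℝ) : ℝ :=
  ((Finset.univ.filter fun i => min a b < v i ∧ v i < max a b).card : ℝ) / N

open Finset

section Helpers

lemma card_filter_comp_equiv {α β : Type*} [Fintype α] [Fintype β] (e : α ≃ β)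
    (P : β → Prop) [DecidablePred P] :
    (univ.filter fun a => P (e a)).card = (univ.filter P).card := by
  apply Finset.card_bij' (fun a _ => e a) (fun b _ => e.symm b) <;> simp

lemma card_filter_sigma' {m : ℕ} {β : Fin m → Type*} [∀ i, Fintype (β i)]
    (P : (Σ i, β i) → Prop) [DecidablePred P] :
    (univ.filter P).card = ∑ i, (univ.filter fun b : β i => P ⟨i, b⟩).card := by
  rw [← Fintype.card_subtype]
  rw [Fintype.card_congr
    (Equiv.mk (fun s : {s : Σ i, β i // P s} => (⟨s.1.1, s.1.2, s.2⟩ : Σ i, {b : β i // P ⟨i, b⟩}))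
      (fun t => ⟨⟨t.1, t.2.1⟩, t.2.2⟩) (fun ⟨⟨i, b⟩, h⟩ => rfl) (fun ⟨i, b, h⟩ => rfl))]
  rw [Fintype.card_sigma]
  exact Finset.sum_congr rfl fun i _ => Fintype.card_subtype _

variable {M : ℕ} {y : Fin M → ℝ} {a : ℝ} {k : Fin M}

lemma mono_count_le (hy : Monotone y) (h : y k ≤ a) :
    (k : ℕ) + 1 ≤ (univ.filter fun j => y j ≤ a).card := by
  rw [← Fin.card_Iic]
  apply Finset.card_le_card
  intro j hj
  simp only [Finset.mem_Iic] at hj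
  simp only [Finset.mem_filter, Finset.mem_univ, true_and]
  exact (hy hj).trans h

lemma mono_count_ge (hy : Monotone y) (h : a ≤ y k) :
    M - (k : ℕ) ≤ (univ.filter fun j => a ≤ y j).card := by
  rw [← Fin.card_Ici]
  apply Finset.card_le_card
  intro j hj
  simp only [Finset.mem_Ici] at hj
  simp only [Finset.mem_filter, Finset.mem_univ, true_and]
  exact h.trans (hy hj)

lemma mono_count_lt (hy : Monotone y) (h : a ≤ y k) :
    (univ.filter fun j => y j < a).card ≤ (k : ℕ) := by
  rw [← Fin.card_Iio]
  apply Finset.card_le_card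
  intro j hj
  simp only [Finset.mem_filter, Finset.mem_univ, true_and] at hj
  simp only [Finset.mem_Iio]
  by_contra hc
  push_neg at hc
  exact absurd (lt_of_le_of_lt (h.trans (hy hc)) hj) (lt_irrefl _)

lemma mono_eq (hy : Monotone y)
    (h1 : (univ.filter fun j => y j < a).card ≤ (k : ℕ))
    (h2 : (k : ℕ) < (univ.filter fun j => y j ≤ a).card) :
    y k = a := by
  refine le_antisymm ?_ ?_
  · by_contra h
    push_neg at h
    have hsub : (univ.filter fun j => y j ≤ a) ⊆ Finset.Iio k := by
      intro j hj
      simp only [Finset.mem_filter, Finset.mem_univ, true_and] at hj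
      simp only [Finset.mem_Iio]
      by_contra hc
      push_neg at hc
      exact absurd (lt_of_le_of_lt hj h) (not_lt.2 (hy hc))
    have := Finset.card_le_card hsub
    rw [Fin.card_Iio] at this
    omega
  · by_contra h
    push_neg at h
    have hsub : Finset.Iic k ⊆ univ.filter fun j => y j < a := by
      intro j hj
      simp only [Finset.mem_Iic] at hj
      simp only [Finset.mem_filter, Finset.mem_univ, true_and]
      exact lt_of_le_of_lt (hy hj) h
    have := Finset.card_le_card hsub
    rw [Fin.card_Iic] at this
    omega

variable (v : Fin M → ℝ)

lemma count_sorted_le (h : (v ∘ Tuple.sort v) k ≤ a) :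
    (k : ℕ) + 1 ≤ (univ.filter fun j => v j ≤ a).card := by
  rw [← card_filter_comp_equiv (Tuple.sort v : Equiv.Perm (Fin M)) (fun j => v j ≤ a)]
  exact mono_count_le (Tuple.monotone_sort v) h

lemma count_sorted_ge (h : a ≤ (v ∘ Tuple.sort v) k) :
    M - (k : ℕ) ≤ (univ.filter fun j => a ≤ v j).card := by
  rw [← card_filter_comp_equiv (Tuple.sort v : Equiv.Perm (Fin M)) (fun j => a ≤ v j)]
  exact mono_count_ge (Tuple.monotone_sort v) h

lemma count_sorted_lt (h : a ≤ (v ∘ Tuple.sort v) k) :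
    (univ.filter fun j => v j < a).card ≤ (k : ℕ) := by
  rw [← card_filter_comp_equiv (Tuple.sort v : Equiv.Perm (Fin M)) (fun j => v j < a)]
  exact mono_count_lt (Tuple.monotone_sort v) h

lemma sorted_eq_of_count
    (h1 : (univ.filter fun j => v j < a).card ≤ (k : ℕ))
    (h2 : (k : ℕ) < (univ.filter fun j => v j ≤ a).card) :
    (v ∘ Tuple.sort v) k = a := by
  apply mono_eq (Tuple.monotone_sort v)
  · show (univ.filter fun j => v ((Tuple.sort v) j) < a).card ≤ (k : ℕ)
    rwa [card_filter_comp_equiv (Tuple.sort v : Equiv.Perm (Fin M)) (fun j => v j < a)]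
  · show (k : ℕ) < (univ.filter fun j => v ((Tuple.sort v) j) ≤ a).card
    rwa [card_filter_comp_equiv (Tuple.sort v : Equiv.Perm (Fin M)) (fun j => v j ≤ a)]

lemma exists_max_mem {n : ℕ} {s : Finset (Fin n)} (hs : s.Nonempty) :
    ∃ T ∈ s, s.card ≤ (T : ℕ) + 1 := by
  refine ⟨s.max' hs, s.max'_mem hs, ?_⟩
  have hsub : s ⊆ Finset.Iic (s.max' hs) := fun j hj => Finset.mem_Iic.2 (Finset.le_max' s j hj)
  have := Finset.card_le_card hsub
  rwa [Fin.card_Iic] at this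

lemma exists_min_mem {n : ℕ} {s : Finset (Fin n)} (hs : s.Nonempty) :
    ∃ T ∈ s, (T : ℕ) + s.card ≤ n := by
  refine ⟨s.min' hs, s.min'_mem hs, ?_⟩
  have hsub : s ⊆ Finset.Ici (s.min' hs) := fun j hj => Finset.mem_Ici.2 (Finset.min'_le s j hj)
  have := Finset.card_le_card hsub
  rw [Fin.card_Ici] at this
  omega

lemma lqv_div {M : ℕ} (hM : 0 < M) (v : Fin M → ℝ) {k : ℕ} (h1 : 1 ≤ k) (h2 : k ≤ M) :
    lqv hM v ((k : ℝ) / (M : ℝ)) = (v ∘ Tuple.sort v) ⟨k - 1, by omega⟩ := by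
  have hM' : (M : ℝ) ≠ 0 := Nat.cast_ne_zero.2 hM.ne'
  have hmul : (M : ℝ) * ((k : ℝ) / M) = (k : ℕ) := by field_simp
  unfold lqv
  congr 1
  apply Fin.ext
  simp only [hmul, Nat.ceil_natCast]
  omega

lemma lqv_eq_sorted {M : ℕ} (hM : 0 < M) (v : Fin M → ℝ) {p : ℝ} (hp0 : 0 < p) (hp1 : p ≤ 1) :
    lqv hM v p = (v ∘ Tuple.sort v) ⟨⌈(M : ℝ) * p⌉₊ - 1, by
      have h : ⌈(M : ℝ) * p⌉₊ ≤ M := Nat.ceil_le.2 (by nlinarith [Nat.cast_nonneg (α := ℝ) M])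
      omega⟩ := by
  have h1 : 1 ≤ ⌈(M : ℝ) * p⌉₊ := Nat.one_le_ceil_iff.2 (by positivity)
  have h2 : ⌈(M : ℝ) * p⌉₊ ≤ M := Nat.ceil_le.2 (by nlinarith [Nat.cast_nonneg (α := ℝ) M])
  unfold lqv
  congr 1
  apply Fin.ext
  simp only
  omega

lemma div_sub_le_div {a b c NN WW : ℝ} (hN : 0 < NN) (hW : 0 < WW)
    (h : (a - b * NN) * WW ≤ c * NN) : a / NN - b ≤ c / WW := by
  have h2 : (a - b * NN) / NN ≤ c / WW := (div_le_div_iff₀ hN hW).2 h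
  have h3 : (a - b * NN) / NN = a / NN - b := by field_simp
  rwa [h3] at h2

lemma sub_div_le_div {a b c NN WW : ℝ} (hN : 0 < NN) (hW : 0 < WW)
    (h : (b * NN - a) * WW ≤ c * NN) : b - a / NN ≤ c / WW := by
  have h2 : (b * NN - a) / NN ≤ c / WW := (div_le_div_iff₀ hN hW).2 h
  have h3 : (b * NN - a) / NN = b - a / NN := by field_simp
  rwa [h3] at h2

lemma block_le {dd cc : ℕ} (hdd : 0 < dd) (v : Fin (cc * dd) → ℝ) (μ : ℝ)
    (g : Fin (cc - 1) → ℝ)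
    (hg : ∀ t : Fin (cc - 1), ∃ kt : Fin (cc * dd),
      (kt : ℕ) = ((t : ℕ) + 1) * dd - 1 ∧ g t = (v ∘ Tuple.sort v) kt) :
    dd * (univ.filter fun t => g t ≤ μ).card ≤ (univ.filter fun j => v j ≤ μ).card := by
  by_cases h0 : (univ.filter fun t => g t ≤ μ).card = 0
  · rw [h0]; simp
  · obtain ⟨T, hT, hcard⟩ := exists_max_mem (Finset.card_pos.1 (Nat.pos_of_ne_zero h0))
    rw [Finset.mem_filter] at hT
    obtain ⟨kt, hkt, hgt⟩ := hg T
    have hTle : (v ∘ Tuple.sort v) kt ≤ μ := by rw [← hgt]; exact hT.2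
    have hcount := count_sorted_le v hTle
    have h5 : dd * (univ.filter fun t => g t ≤ μ).card ≤ dd * ((T : ℕ) + 1) :=
      Nat.mul_le_mul_left dd hcard
    have h6 : dd * ((T : ℕ) + 1) = ((T : ℕ) + 1) * dd := Nat.mul_comm _ _
    have h7 : 1 ≤ ((T : ℕ) + 1) * dd := Nat.mul_pos (Nat.succ_pos _) hdd
    omega

lemma block_ge {dd cc : ℕ} (hdd : 0 < dd) (v : Fin (cc * dd) → ℝ) (μ : ℝ)
    (g : Fin (cc - 1) → ℝ)
    (hg : ∀ t : Fin (cc - 1), ∃ kt : Fin (cc * dd),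
      (kt : ℕ) = ((t : ℕ) + 1) * dd - 1 ∧ g t = (v ∘ Tuple.sort v) kt) :
    dd * (univ.filter fun t => μ ≤ g t).card ≤ (univ.filter fun j => μ ≤ v j).card := by
  by_cases h0 : (univ.filter fun t => μ ≤ g t).card = 0
  · rw [h0]; simp
  · obtain ⟨T, hT, hcard⟩ := exists_min_mem (Finset.card_pos.1 (Nat.pos_of_ne_zero h0))
    rw [Finset.mem_filter] at hT
    obtain ⟨kt, hkt, hgt⟩ := hg T
    have hTge : μ ≤ (v ∘ Tuple.sort v) kt := by rw [← hgt]; exact hT.2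
    have hcount := count_sorted_ge v hTge
    have hb1 : 1 ≤ (univ.filter fun t => μ ≤ g t).card := Nat.pos_of_ne_zero h0
    have hTcc : (T : ℕ) + 1 + (univ.filter fun t => μ ≤ g t).card ≤ cc := by
      have := T.2
      omega
    have h2 : ((T : ℕ) + 1 + (univ.filter fun t => μ ≤ g t).card) * dd ≤ cc * dd :=
      Nat.mul_le_mul_right dd hTcc
    have h3 : ((T : ℕ) + 1 + (univ.filter fun t => μ ≤ g t).card) * dd
        = ((T : ℕ) + 1) * dd + (univ.filter fun t => μ ≤ g t).card * dd := Nat.add_mul _ _ _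
    have h4 : dd * (univ.filter fun t => μ ≤ g t).card
        = (univ.filter fun t => μ ≤ g t).card * dd := Nat.mul_comm _ _
    have h7 : 1 ≤ ((T : ℕ) + 1) * dd := Nat.mul_pos (Nat.succ_pos _) hdd
    omega

end Helpers

set_option maxHeartbeats 10000000 in
theorem coarsening_algorithm_unequal_partitions (m d : ℕ)
    (hm : 2 ≤ m) (hd : 0 < d) (c : Fin m → ℕ) (hc : ∀ i, 2 ≤ c i)
    (N : ℕ) (hN : N = ∑ i, c i * d) (hN0 : 0 < N)
    (e : (Σ i : Fin m, Fin (c i * d)) ≃ Fin N)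
    (x : Fin N → ℝ)
    (W : ℕ) (hW : W = ∑ i, (c i - 1)) (hW0 : 0 < W)
    (f : (Σ i : Fin m, Fin (c i - 1)) ≃ Fin W)
    (w : Fin W → ℝ)
    (hw : ∀ (i : Fin m) (t : Fin (c i - 1)),
      w (f ⟨i, t⟩) =
        lqv (Nat.mul_pos (by have := hc i; omega) hd : 0 < c i * d)
          (fun j : Fin (c i * d) => x (e ⟨i, j⟩))
          (((t : ℕ) + 1 : ℝ) / (c i : ℝ)))
    (p : ℝ) (hp : p ∈ Set.Ioc (0 : ℝ) 1) :
    (∃ p' : ℝ, |p' - p| ≤ ((m : ℝ) + 1) / ((∑ i, (c i : ℝ)) - m) ∧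
      lqv hW0 w p = lqv hN0 x p') ∧
    dosv x (lqv hW0 w p) (lqv hN0 x p) ≤ ((m : ℝ) + 1) / ((∑ i, (c i : ℝ)) - m) := by
  classical
  obtain ⟨hp0, hp1⟩ := hp
  -- basic arithmetic relations
  have hWm : m ≤ W := by
    rw [hW]
    calc m = ∑ _i : Fin m, 1 := by simp
    _ ≤ ∑ i, (c i - 1) := Finset.sum_le_sum fun i _ => by have := hc i; omega
  have hsumc : W + m = ∑ i, c i := by
    have h1 : W + m = ∑ i, ((c i - 1) + 1) := by rw [hW, Finset.sum_add_distrib]; simp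
    rw [h1]
    exact Finset.sum_congr rfl fun i _ => by have := hc i; omega
  have hNeq : N = (W + m) * d := by rw [hN, hsumc, Finset.sum_mul]
  have hWr : (∑ i, (c i : ℝ)) - m = (W : ℝ) := by
    have h2 : ((W + m : ℕ) : ℝ) = ∑ i, (c i : ℝ) := by rw [hsumc]; push_cast; rfl
    push_cast at h2
    linarith
  rw [hWr]
  set μ := lqv hW0 w p with hμdef
  set ν := lqv hN0 x p with hνdef
  clear_value μ ν
  -- counts
  set L := (univ.filter fun j : Fin N => x j ≤ μ).card with hL
  set G := (univ.filter fun j : Fin N => μ ≤ x j).card with hGdef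
  set A := (univ.filter fun j : Fin W => w j ≤ μ).card with hA
  set B := (univ.filter fun j : Fin W => μ ≤ w j).card with hB
  clear_value L G A B
  -- per-block coarsening bounds
  have hgblock : ∀ i : Fin m, ∀ t : Fin (c i - 1), ∃ kt : Fin (c i * d),
      (kt : ℕ) = ((t : ℕ) + 1) * d - 1 ∧
      w (f ⟨i, t⟩) = ((fun j : Fin (c i * d) => x (e ⟨i, j⟩)) ∘
        Tuple.sort (fun j : Fin (c i * d) => x (e ⟨i, j⟩))) kt := by
    intro i t
    have hci := hc i
    have hMi : 0 < c i * d := Nat.mul_pos (by omega) hd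
    have hidx : ((t : ℕ) + 1) * d ≤ c i * d := Nat.mul_le_mul_right d (by have := t.2; omega)
    have hidx1 : 1 ≤ ((t : ℕ) + 1) * d := Nat.mul_pos (Nat.succ_pos _) hd
    refine ⟨⟨((t : ℕ) + 1) * d - 1, by omega⟩, rfl, ?_⟩
    rw [hw i t]
    have hcast : (((t : ℕ) : ℝ) + 1) / (c i : ℝ)
        = ((((t : ℕ) + 1) * d : ℕ) : ℝ) / ((c i * d : ℕ) : ℝ) := by
      have h1 : (c i : ℝ) ≠ 0 := Nat.cast_ne_zero.2 (by omega)
      have h2 : (d : ℝ) ≠ 0 := Nat.cast_ne_zero.2 hd.ne'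
      push_cast
      field_simp
    rw [hcast]
    exact lqv_div hMi _ hidx1 hidx
  -- sum decompositions
  have hAsum : A = ∑ i, (univ.filter fun t : Fin (c i - 1) => w (f ⟨i, t⟩) ≤ μ).card := by
    rw [hA, ← card_filter_comp_equiv f (fun j => w j ≤ μ),
      card_filter_sigma' (fun s : Σ i : Fin m, Fin (c i - 1) => w (f s) ≤ μ)]
  have hBsum : B = ∑ i, (univ.filter fun t : Fin (c i - 1) => μ ≤ w (f ⟨i, t⟩)).card := by
    rw [hB, ← card_filter_comp_equiv f (fun j => μ ≤ w j),
      card_filter_sigma' (fun s : Σ i : Fin m, Fin (c i - 1) => μ ≤ w (f s))]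
  have hLsum : L = ∑ i, (univ.filter fun j : Fin (c i * d) => x (e ⟨i, j⟩) ≤ μ).card := by
    rw [hL, ← card_filter_comp_equiv e (fun j => x j ≤ μ),
      card_filter_sigma' (fun s : Σ i : Fin m, Fin (c i * d) => x (e s) ≤ μ)]
  have hGsum : G = ∑ i, (univ.filter fun j : Fin (c i * d) => μ ≤ x (e ⟨i, j⟩)).card := by
    rw [hGdef, ← card_filter_comp_equiv e (fun j => μ ≤ x j),
      card_filter_sigma' (fun s : Σ i : Fin m, Fin (c i * d) => μ ≤ x (e s))]
  have hdAL : d * A ≤ L := by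
    rw [hAsum, hLsum, Finset.mul_sum]
    exact Finset.sum_le_sum fun i _ => block_le hd _ μ _ (hgblock i)
  have hdBG : d * B ≤ G := by
    rw [hBsum, hGsum, Finset.mul_sum]
    exact Finset.sum_le_sum fun i _ => block_ge hd _ μ _ (hgblock i)
  -- rank of μ within w
  have hW0' : (0 : ℝ) < W := by exact_mod_cast hW0
  have hN0' : (0 : ℝ) < N := by exact_mod_cast hN0
  set q := ⌈(W : ℝ) * p⌉₊ with hqdef
  clear_value q
  have hq1 : 1 ≤ q := by rw [hqdef]; exact Nat.one_le_ceil_iff.2 (by positivity)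
  have hqW : q ≤ W := by rw [hqdef]; exact Nat.ceil_le.2 (by nlinarith)
  have hrq1 : (W : ℝ) * p ≤ q := by rw [hqdef]; exact Nat.le_ceil _
  have hrq2 : (q : ℝ) < (W : ℝ) * p + 1 := by
    rw [hqdef]; exact Nat.ceil_lt_add_one (by positivity)
  have hμs : (w ∘ Tuple.sort w) ⟨q - 1, by omega⟩ = μ := by
    rw [hμdef]
    have hidx : (⟨q - 1, by omega⟩ : Fin W) = ⟨⌈(W : ℝ) * p⌉₊ - 1, by omega⟩ :=
      Fin.ext (by simp only []; omega)
    rw [hidx]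
    exact (lqv_eq_sorted hW0 w hp0 hp1).symm
  have hAq : q ≤ A := by
    have h' := count_sorted_le w hμs.le
    rw [← hA] at h'
    have h'' : q - 1 + 1 ≤ A := h'
    omega
  have hBq : W - (q - 1) ≤ B := by
    have h' := count_sorted_ge w hμs.ge
    rw [← hB] at h'
    exact h'
  -- μ is attained by x
  have hwx : ∀ jw : Fin W, ∃ j : Fin N, x j = w jw := by
    intro jw
    obtain ⟨⟨i, t⟩, rfl⟩ : ∃ s : Σ i : Fin m, Fin (c i - 1), f s = jw :=
      ⟨f.symm jw, f.apply_symm_apply jw⟩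
    obtain ⟨kt, _, hgt⟩ := hgblock i t
    exact ⟨e ⟨i, Tuple.sort _ kt⟩, hgt.symm⟩
  obtain ⟨jμ, hjμ⟩ := hwx (Tuple.sort w ⟨q - 1, by omega⟩)
  have hjμ' : x jμ = μ := by rw [hjμ]; exact hμs
  have hLGN : N + 1 ≤ L + G := by
    have h1 : (univ.filter fun j : Fin N => x j ≤ μ) ∪ (univ.filter fun j : Fin N => μ ≤ x j)
        = univ := by
      ext j
      simp only [Finset.mem_union, Finset.mem_filter, Finset.mem_univ, true_and, iff_true]
      exact le_total (x j) μ
    have h2 := Finset.card_union_add_card_inter (univ.filter fun j : Fin N => x j ≤ μ)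
      (univ.filter fun j : Fin N => μ ≤ x j)
    rw [h1] at h2
    have h3 : jμ ∈ (univ.filter fun j : Fin N => x j ≤ μ) ∩
        (univ.filter fun j : Fin N => μ ≤ x j) := by
      simp only [Finset.mem_inter, Finset.mem_filter, Finset.mem_univ, true_and]
      exact ⟨hjμ'.le, hjμ'.ge⟩
    have h4 := Finset.card_pos.2 ⟨jμ, h3⟩
    have h5 : (univ : Finset (Fin N)).card = N := by simp
    rw [← hL, ← hGdef] at h2
    omega
  have h_lt : (univ.filter fun j : Fin N => x j < μ).card = N - G := by
    have h1 : (univ.filter fun j : Fin N => x j < μ)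
        = (univ.filter fun j : Fin N => μ ≤ x j)ᶜ := by
      ext j
      simp [not_le]
    rw [h1, Finset.card_compl, ← hGdef, Fintype.card_fin]
  have hGN : G ≤ N := by
    rw [hGdef]
    exact le_of_le_of_eq (Finset.card_filter_le _ _) (by simp)
  have hLN : L ≤ N := by
    rw [hL]
    exact le_of_le_of_eq (Finset.card_filter_le _ _) (by simp)
  -- choice of the rank k
  set k0 := ⌈(N : ℝ) * p⌉₊ with hk0def
  clear_value k0
  have hk01 : 1 ≤ k0 := by rw [hk0def]; exact Nat.one_le_ceil_iff.2 (by positivity)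
  have hk0N : k0 ≤ N := by rw [hk0def]; exact Nat.ceil_le.2 (by nlinarith)
  have hrk0a : (N : ℝ) * p ≤ k0 := by rw [hk0def]; exact Nat.le_ceil _
  have hrk0b : (k0 : ℝ) < (N : ℝ) * p + 1 := by
    rw [hk0def]; exact Nat.ceil_lt_add_one (by positivity)
  have hνs : (x ∘ Tuple.sort x) ⟨k0 - 1, by omega⟩ = ν := by
    rw [hνdef]
    have hidx : (⟨k0 - 1, by omega⟩ : Fin N) = ⟨⌈(N : ℝ) * p⌉₊ - 1, by omega⟩ :=
      Fin.ext (by simp only []; omega)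
    rw [hidx]
    exact (lqv_eq_sorted hN0 x hp0 hp1).symm
  set k := max (N - G + 1) (min L k0) with hkdef
  clear_value k
  have hNGL : N - G + 1 ≤ L := by omega
  have hk1 : 1 ≤ k := by omega
  have hkL : k ≤ L := by omega
  have hkN : k ≤ N := by omega
  have hμx : (x ∘ Tuple.sort x) ⟨k - 1, by omega⟩ = μ := by
    apply sorted_eq_of_count x
    · show (univ.filter fun j : Fin N => x j < μ).card ≤ k - 1
      omega
    · show k - 1 < (univ.filter fun j : Fin N => x j ≤ μ).card
      rw [← hL]
      omega
  have hkr : lqv hN0 x ((k : ℝ) / N) = μ := by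
    rw [lqv_div hN0 x hk1 hkN]
    exact hμx
  have hcase1 : k = N - G + 1 ∨ k ≤ k0 := by omega
  have hcase2 : L ≤ k ∨ k0 ≤ k := by omega
  have hkcase3 : k < k0 → k = L := by omega
  have hkcase4 : k0 < k → k = N - G + 1 := by omega
  -- real-number facts
  have hd0 : (0 : ℝ) < d := by exact_mod_cast hd
  have hd1 : (1 : ℝ) ≤ d := by exact_mod_cast hd
  have hm2 : (2 : ℝ) ≤ m := by exact_mod_cast hm
  have hWmr : (m : ℝ) ≤ W := by exact_mod_cast hWm
  have hNr : (N : ℝ) = ((W : ℝ) + m) * d := by rw [hNeq]; push_cast; ring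
  have hrL : (d : ℝ) * q ≤ L := by exact_mod_cast (Nat.mul_le_mul_left d hAq).trans hdAL
  have hrG : (d : ℝ) * ((W : ℝ) + 1 - q) ≤ G := by
    have h := (Nat.mul_le_mul_left d hBq).trans hdBG
    have h2 : ((d * (W - (q - 1)) : ℕ) : ℝ) = (d : ℝ) * ((W : ℝ) + 1 - q) := by
      rw [Nat.cast_mul, Nat.cast_sub (by omega), Nat.cast_sub (by omega : 1 ≤ q), Nat.cast_one]
      ring
    calc (d : ℝ) * ((W : ℝ) + 1 - q) = ((d * (W - (q - 1)) : ℕ) : ℝ) := h2.symm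
      _ ≤ G := by exact_mod_cast h
  have hGr : (N : ℝ) - G ≤ (d : ℝ) * ((m : ℝ) + (q : ℝ) - 1) := by
    rw [hNr]
    linarith
  have hq' : (q : ℝ) - 1 < (W : ℝ) * p := by linarith
  have hXr : (N : ℝ) - G < (d : ℝ) * m + (d : ℝ) * ((W : ℝ) * p) := by
    nlinarith [mul_lt_mul_of_pos_left hq' hd0]
  have hLdwp : (d : ℝ) * ((W : ℝ) * p) ≤ L := by
    nlinarith [mul_le_mul_of_nonneg_left hrq1 hd0.le]
  have hWN : (W : ℝ) ≤ N := by
    nlinarith [mul_le_mul_of_nonneg_left hd1 (by positivity : (0 : ℝ) ≤ (W : ℝ) + m)]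
  constructor
  · refine ⟨(k : ℝ) / N, ?_, hkr.symm⟩
    rw [abs_sub_le_iff]
    constructor
    · apply div_sub_le_div hN0' hW0'
      rcases hcase1 with hcase | hcase
      · have hkr2 : (k : ℝ) = (N : ℝ) - G + 1 := by
          rw [hcase, Nat.cast_add, Nat.cast_sub hGN, Nat.cast_one]
        rw [hkr2]
        rw [hNr] at hXr ⊢
        nlinarith [hXr, hW0', hp0, hp1, hd1, hm2, hWmr,
          mul_lt_mul_of_pos_right hXr hW0',
          mul_nonneg (mul_nonneg (mul_nonneg hp0.le (by positivity : (0:ℝ) ≤ (m:ℝ))) hd0.le) hW0'.le,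
          mul_nonneg (mul_nonneg hd0.le (by positivity : (0:ℝ) ≤ (m:ℝ))) (by positivity : (0:ℝ) ≤ (m:ℝ)),
          mul_nonneg hd0.le (by positivity : (0:ℝ) ≤ (m:ℝ)),
          mul_le_mul_of_nonneg_right hd1 hW0'.le]
      · have hkk0 : (k : ℝ) ≤ k0 := by exact_mod_cast hcase
        nlinarith [mul_lt_mul_of_pos_right (show (k : ℝ) - p * N < 1 by nlinarith) hW0',
          hWN, mul_nonneg (by positivity : (0:ℝ) ≤ (m:ℝ)) hN0'.le]
    · apply sub_div_le_div hN0' hW0'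
      rcases hcase2 with hcase | hcase
      · have hLk : (L : ℝ) ≤ k := by exact_mod_cast hcase
        have h6 : p * (N : ℝ) - k ≤ p * m * d := by
          rw [hNr]
          nlinarith [hLdwp]
        rw [hNr]
        rw [hNr] at h6
        nlinarith [mul_le_mul_of_nonneg_right h6 hW0'.le,
          mul_le_mul_of_nonneg_right hp1 (by positivity : (0:ℝ) ≤ (m:ℝ) * d * W),
          mul_nonneg (mul_nonneg hd0.le (by positivity : (0:ℝ) ≤ (m:ℝ))) (by positivity : (0:ℝ) ≤ (m:ℝ)),
          mul_nonneg hd0.le (by positivity : (0:ℝ) ≤ (m:ℝ)),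
          mul_le_mul_of_nonneg_right hd1 hW0'.le]
      · have hk0k : (k0 : ℝ) ≤ k := by exact_mod_cast hcase
        have h7 : p * (N : ℝ) - k ≤ 0 := by nlinarith
        nlinarith [mul_nonneg (neg_nonneg.2 h7) hW0'.le,
          mul_nonneg (by positivity : (0:ℝ) ≤ (m:ℝ) + 1) hN0'.le]
  · -- degree of separation bound
    have hcard : ∀ S : Finset (Fin N), (∀ i ∈ S, min μ ν < x i ∧ x i < max μ ν) →
        (S.card : ℝ) ≤ (d : ℝ) * m := by
      intro S hS
      by_cases hμν : μ = ν
      · have hempty : S = ∅ := by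
          apply Finset.eq_empty_of_forall_notMem
          intro i hi
          obtain ⟨h1, h2⟩ := hS i hi
          simp only [hμν, min_self, max_self] at h1 h2
          exact absurd (h1.trans h2) (lt_irrefl _)
        rw [hempty]
        simp
        positivity
      · have hkk0 : k ≠ k0 := by
          intro hkk
          apply hμν
          rw [← hμx, ← hνs]
          exact congrArg _ (Fin.ext (by simp only [hkk]))
        rcases Nat.lt_or_ge k k0 with hlt | hge
        · -- k = L < k0, μ < ν
          have hkLeq : k = L := hkcase3 hlt
          have hμleν : μ ≤ ν := by
            rw [← hμx, ← hνs]
            exact Tuple.monotone_sort x (Fin.mk_le_mk.2 (by omega))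
          have hμltν : μ < ν := lt_of_le_of_ne hμleν hμν
          have hmin : min μ ν = μ := min_eq_left hμleν
          have hmax : max μ ν = ν := max_eq_right hμleν
          have hdisj : Disjoint S (univ.filter fun i : Fin N => x i ≤ μ) := by
            rw [Finset.disjoint_left]
            intro i hi1 hi2
            rw [Finset.mem_filter] at hi2
            obtain ⟨h1, _⟩ := hS i hi1
            rw [hmin] at h1
            exact absurd hi2.2 (not_le.2 h1)
          have hsub : S ∪ (univ.filter fun i : Fin N => x i ≤ μ)
              ⊆ univ.filter fun i : Fin N => x i < ν := by
            intro i hi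
            rw [Finset.mem_union] at hi
            rw [Finset.mem_filter]
            refine ⟨Finset.mem_univ i, ?_⟩
            rcases hi with hi | hi
            · obtain ⟨_, h2⟩ := hS i hi
              rw [hmax] at h2
              exact h2
            · rw [Finset.mem_filter] at hi
              exact lt_of_le_of_lt hi.2 hμltν
          have hcount : S.card + L ≤ (univ.filter fun i : Fin N => x i < ν).card := by
            rw [hL, ← Finset.card_union_of_disjoint hdisj]
            exact Finset.card_le_card hsub
          have hltν : (univ.filter fun i : Fin N => x i < ν).card ≤ k0 - 1 :=
            count_sorted_lt x hνs.ge
          have hbn : S.card + L + 1 ≤ k0 := by omega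
          have hbr : ((S.card : ℕ) : ℝ) + L + 1 ≤ (k0 : ℝ) := by exact_mod_cast hbn
          rw [hNr] at hrk0b
          nlinarith [hLdwp,
            mul_le_mul_of_nonneg_right hp1 (by positivity : (0:ℝ) ≤ (m:ℝ) * d)]
        · -- k0 < k = N - G + 1, ν < μ
          have hlt' : k0 < k := by omega
          have hkeq : k = N - G + 1 := hkcase4 hlt'
          have hνleμ : ν ≤ μ := by
            rw [← hμx, ← hνs]
            exact Tuple.monotone_sort x (Fin.mk_le_mk.2 (by omega))
          have hνltμ : ν < μ := lt_of_le_of_ne hνleμ (Ne.symm hμν)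
          have hmin : min μ ν = ν := min_eq_right hνleμ
          have hmax : max μ ν = μ := max_eq_left hνleμ
          have hdisj : Disjoint S (univ.filter fun i : Fin N => x i ≤ ν) := by
            rw [Finset.disjoint_left]
            intro i hi1 hi2
            rw [Finset.mem_filter] at hi2
            obtain ⟨h1, _⟩ := hS i hi1
            rw [hmin] at h1
            exact absurd hi2.2 (not_le.2 h1)
          have hsub : S ∪ (univ.filter fun i : Fin N => x i ≤ ν)
              ⊆ univ.filter fun i : Fin N => x i < μ := by
            intro i hi
            rw [Finset.mem_union] at hi
            rw [Finset.mem_filter]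
            refine ⟨Finset.mem_univ i, ?_⟩
            rcases hi with hi | hi
            · obtain ⟨_, h2⟩ := hS i hi
              rw [hmax] at h2
              exact h2
            · rw [Finset.mem_filter] at hi
              exact lt_of_le_of_lt hi.2 hνltμ
          have hcount : S.card + (univ.filter fun i : Fin N => x i ≤ ν).card
              ≤ (univ.filter fun i : Fin N => x i < μ).card := by
            rw [← Finset.card_union_of_disjoint hdisj]
            exact Finset.card_le_card hsub
          have hk0count : k0 - 1 + 1 ≤ (univ.filter fun j : Fin N => x j ≤ ν).card :=
            count_sorted_le x hνs.le
          have hbn : S.card + k0 ≤ N - G := by omega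
          have hbr : ((S.card : ℕ) : ℝ) + k0 ≤ (N : ℝ) - G := by
            have hc : ((S.card + k0 : ℕ) : ℝ) ≤ ((N - G : ℕ) : ℝ) := Nat.cast_le.2 hbn
            rw [Nat.cast_sub hGN] at hc
            push_cast at hc
            linarith
          rw [hNr] at hrk0a
          rw [hNr] at hXr
          nlinarith [mul_le_mul_of_nonneg_right hp1 (by positivity : (0:ℝ) ≤ (m:ℝ) * d)]
    unfold dosv
    rw [div_le_div_iff₀ hN0' hW0']
    refine le_trans (mul_le_mul_of_nonneg_right (hcard _ ?_) hW0'.le) ?_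
    · intro i hi
      exact (Finset.mem_filter.1 hi).2
    · rw [hNr]
      nlinarith [mul_nonneg (mul_nonneg hd0.le (by positivity : (0:ℝ) ≤ (m:ℝ)))
          (by positivity : (0:ℝ) ≤ (m:ℝ)),
        mul_nonneg hd0.le (by positivity : (0:ℝ) ≤ (m:ℝ)),
        mul_le_mul_of_nonneg_right hd1 hW0'.le, hWmr, hW0', hm2, hd1]
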